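/- For the deterministic co-Büchi automaton A_φ of the two-message specification φ = F m1 ∧ F m2 (states q0,q1,q2,q3; rejecting states q0,q1,q2; q0 loops on ¬m1∧¬m2, goes to q1 on m1∧¬m2, to q2 on ¬m1∧m2, to q3 on m1∧m2; q1 loops on ¬m2 and goes to q3 on m2; q2 loops on ¬m1 and goes to q3 on m1; q3 loops), the strategy s1 for process p1 (inputs {m2}, outputs {m1}) that outputs m1 at every step is delay-dominant for A_φ, whereas the strategy t1 that outputs m1 at step j+1 iff m2 occurred at some step ≤ j is not delay-dominant for A_φ. -/
import Mathlib


open scoped Classical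

/-- An alternating co-Büchi automaton (ACA) `A = (Q, q₀, δ, F)` over alphabet `2^α`.
The transition function is given in DNF set notation: `trans q ι` is a set of
sets of states (each inner set is one disjunct, read conjunctively).
For alternating Büchi automata we reuse this structure, reading `rejecting` as
the set of accepting states `F`. -/
structure ACA (α : Type*) (Q : Type*) where
  init : Q
  trans : Q → Set α → Set (Set Q)
  rejecting : Set Q

/-- A run tree of an ACA induced by the word `σ`: a `Q`-labeled tree whose root is
labeled with the initial state and such that the set of labels of the children of a
node `x` is one of the disjuncts of the transition formula at `x`. -/
structure RunTree {α Q : Type*} (A : ACA α Q) (σ : ℕ → Set α) where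
  nodes : Set (List ℕ)
  label : List ℕ → Q
  root_mem : [] ∈ nodes
  prefix_closed : ∀ x d, x ++ [d] ∈ nodes → x ∈ nodes
  root_label : label [] = A.init
  trans_ok : ∀ x ∈ nodes,
    {q | ∃ d, x ++ [d] ∈ nodes ∧ label (x ++ [d]) = q} ∈ A.trans (label x) (σ x.length)

/-- An infinite branch of a run tree. -/
def RunTree.IsBranch {α Q : Type*} {A : ACA α Q} {σ : ℕ → Set α} (r : RunTree A σ)
    (b : ℕ → Q) : Prop :=
  ∃ p : ℕ → List ℕ, p 0 = [] ∧ (∀ i, ∃ d, p (i + 1) = p i ++ [d]) ∧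
    (∀ i, p i ∈ r.nodes) ∧ ∀ i, b i = r.label (p i)

/-- Co-Büchi acceptance for ACAs: some run tree all of whose infinite branches visit
rejecting states only finitely often. -/
def ACA.Accepts {α Q : Type*} (A : ACA α Q) (σ : ℕ → Set α) : Prop :=
  ∃ r : RunTree A σ, ∀ b, r.IsBranch b → {j | b j ∈ A.rejecting}.Finite

/-- A strategy for Duplicator in the delay-dominance game: given the history of
state pairs, the current pair `(p,q)` and Spoiler's choice `c ∈ δ(p, σ_j)`, it
chooses `c' ∈ δ(q, σ'_j)`; and given additionally Spoiler's choice `q' ∈ c'`,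
it chooses `p' ∈ c`. -/
structure DupStrategy (Q : Type*) where
  chooseSet : List (Q × Q) → Q × Q → Set Q → Set Q
  chooseState : List (Q × Q) → Q × Q → Set Q → Set Q → Q → Q

/-- A strategy for Spoiler in the delay-dominance game: it chooses `c ∈ δ(p, σ_j)`
(first move of a round), and given Duplicator's choice `c'` it chooses `q' ∈ c'`. -/
structure SpoStrategy (Q : Type*) where
  chooseSet : List (Q × Q) → Q × Q → Set Q
  chooseState : List (Q × Q) → Q × Q → Set Q → Q

namespace DelayDom

variable {α Q : Type*}

/-- The history (list of previous state pairs) of a play `ρ` at round `j`. -/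
def hist (ρ : ℕ → Q × Q) (j : ℕ) : List (Q × Q) := (List.range j).map ρ

/-- Histories/positions of the delay-dominance game `(A, σ, σ')` reachable when
Duplicator plays `τ` (Spoiler moving arbitrarily but legally). -/
inductive DupReach (A : ACA α Q) (σ σ' : ℕ → Set α) (τ : DupStrategy Q) :
    List (Q × Q) → Q × Q → Prop
  | init : DupReach A σ σ' τ [] (A.init, A.init)
  | step {h : List (Q × Q)} {pq : Q × Q} (hr : DupReach A σ σ' τ h pq) {c : Set Q}
      (hc : c ∈ A.trans pq.1 (σ h.length)) {q' : Q}
      (hq' : q' ∈ τ.chooseSet h pq c) :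
      DupReach A σ σ' τ (h ++ [pq])
        (τ.chooseState h pq c (τ.chooseSet h pq c) q', q')

/-- Duplicator's strategy `τ` is valid (legal) at every reachable position of the
delay-dominance game `(A, σ, σ')`. -/
def DupValid (A : ACA α Q) (σ σ' : ℕ → Set α) (τ : DupStrategy Q) : Prop :=
  ∀ h pq, DupReach A σ σ' τ h pq →
    ∀ c ∈ A.trans pq.1 (σ h.length),
      τ.chooseSet h pq c ∈ A.trans pq.2 (σ' h.length) ∧
      ∀ q' ∈ τ.chooseSet h pq c,
        τ.chooseState h pq c (τ.chooseSet h pq c) q' ∈ c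

/-- An initial play (sequence of state pairs, one per round) consistent with
Duplicator's strategy `τ` in the delay-dominance game `(A, σ, σ')`. -/
def DupConsistent (A : ACA α Q) (σ σ' : ℕ → Set α) (τ : DupStrategy Q)
    (ρ : ℕ → Q × Q) : Prop :=
  ρ 0 = (A.init, A.init) ∧
  ∀ j, ∃ c ∈ A.trans (ρ j).1 (σ j),
    (ρ (j + 1)).2 ∈ τ.chooseSet (hist ρ j) (ρ j) c ∧
    (ρ (j + 1)).1 =
      τ.chooseState (hist ρ j) (ρ j) c (τ.chooseSet (hist ρ j) (ρ j) c) ((ρ (j + 1)).2)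

/-- Winning condition for Duplicator on a play: every round whose dominant state
(second component) is rejecting is weakly followed by a round whose alternative
state (first component) is rejecting. -/
def WinCond (A : ACA α Q) (ρ : ℕ → Q × Q) : Prop :=
  ∀ j, (ρ j).2 ∈ A.rejecting → ∃ j', j ≤ j' ∧ (ρ j').1 ∈ A.rejecting

/-- Duplicator wins the delay-dominance game `(A, σ, σ')`. -/
def DupWins (A : ACA α Q) (σ σ' : ℕ → Set α) : Prop :=
  ∃ τ : DupStrategy Q, DupValid A σ σ' τ ∧
    ∀ ρ, DupConsistent A σ σ' τ ρ → WinCond A ρ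

/-- Reachable positions when Spoiler plays `μ`. -/
inductive SpoReach (A : ACA α Q) (σ σ' : ℕ → Set α) (μ : SpoStrategy Q) :
    List (Q × Q) → Q × Q → Prop
  | init : SpoReach A σ σ' μ [] (A.init, A.init)
  | step {h : List (Q × Q)} {pq : Q × Q} (hr : SpoReach A σ σ' μ h pq) {c' : Set Q}
      (hc' : c' ∈ A.trans pq.2 (σ' h.length)) {p' : Q}
      (hp' : p' ∈ μ.chooseSet h pq) :
      SpoReach A σ σ' μ (h ++ [pq]) (p', μ.chooseState h pq c')

/-- Spoiler's strategy `μ` is valid (legal) at every reachable position. -/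
def SpoValid (A : ACA α Q) (σ σ' : ℕ → Set α) (μ : SpoStrategy Q) : Prop :=
  ∀ h pq, SpoReach A σ σ' μ h pq →
    μ.chooseSet h pq ∈ A.trans pq.1 (σ h.length) ∧
    ∀ c' ∈ A.trans pq.2 (σ' h.length), μ.chooseState h pq c' ∈ c'

/-- An initial play consistent with Spoiler's strategy `μ`. -/
def SpoConsistent (A : ACA α Q) (σ σ' : ℕ → Set α) (μ : SpoStrategy Q)
    (ρ : ℕ → Q × Q) : Prop :=
  ρ 0 = (A.init, A.init) ∧
  ∀ j, ∃ c' ∈ A.trans (ρ j).2 (σ' j),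
    (ρ (j + 1)).2 = μ.chooseState (hist ρ j) (ρ j) c' ∧
    (ρ (j + 1)).1 ∈ μ.chooseSet (hist ρ j) (ρ j)

end DelayDom

/-- A process strategy: a function from histories of inputs to outputs. -/
abbrev Strat (α : Type*) := List (Set α) → Set α

/-- The computation of strategy `s` (for a process with inputs `I` and outputs `O`)
on input sequence `γ`: at each step the letter consists of the current inputs
together with the output produced from the input history (Moore-style). -/
def comp {α : Type*} (I O : Set α) (s : Strat α) (γ : ℕ → Set α) : ℕ → Set α :=
  fun j => (γ j ∩ I) ∪ (s ((List.range j).map fun k => γ k ∩ I) ∩ O)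

/-- `s` delay-dominates `t` on input `γ` for the ACA `A`: Duplicator wins the
delay-dominance game `(A, comp(t,γ), comp(s,γ))`. -/
def DelayDominatesOn {α Q : Type*} (A : ACA α Q) (I O : Set α) (s t : Strat α)
    (γ : ℕ → Set α) : Prop :=
  DelayDom.DupWins A (comp I O t γ) (comp I O s γ)

/-- `s` is delay-dominant for `A`: it delay-dominates every alternative strategy on
every input sequence. -/
def DelayDominant {α Q : Type*} (A : ACA α Q) (I O : Set α) (s : Strat α) : Prop :=
  ∀ (t : Strat α) (γ : ℕ → Set α), DelayDominatesOn A I O s t γ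

/-- A universal co-Büchi automaton (UCA). -/
structure UCA (α : Type*) (Q : Type*) where
  inits : Set Q
  trans : Set (Q × Set α × Q)
  rejecting : Set Q

def UCA.IsRun {α Q : Type*} (B : UCA α Q) (σ : ℕ → Set α) (r : ℕ → Q) : Prop :=
  r 0 ∈ B.inits ∧ ∀ j, (r j, σ j, r (j + 1)) ∈ B.trans

/-- UCA acceptance: every run visits rejecting states only finitely often. -/
def UCA.Accepts {α Q : Type*} (B : UCA α Q) (σ : ℕ → Set α) : Prop :=
  ∀ r, B.IsRun σ r → {j | r j ∈ B.rejecting}.Finite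

/-- Successor function of the deterministic co-Büchi automaton `A_φ` for
`φ = F m₁ ∧ F m₂`, with `m₁ = 0` and `m₂ = 1` in `Fin 2` and states `q₀,…,q₃`
as `0,…,3` in `Fin 4`. -/
noncomputable def msgNext (q : Fin 4) (ι : Set (Fin 2)) : Fin 4 :=
  if q = 0 then
    (if (0 : Fin 2) ∈ ι ∧ (1 : Fin 2) ∈ ι then 3
     else if (0 : Fin 2) ∈ ι then 1
     else if (1 : Fin 2) ∈ ι then 2
     else 0)
  else if q = 1 then (if (1 : Fin 2) ∈ ι then 3 else 1)
  else if q = 2 then (if (0 : Fin 2) ∈ ι then 3 else 2)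
  else 3

/-- The deterministic ACA `A_φ` for `φ = F m₁ ∧ F m₂` with rejecting states
`{q₀, q₁, q₂}`. -/
noncomputable def msgACA : ACA (Fin 2) (Fin 4) where
  init := 0
  rejecting := {0, 1, 2}
  trans := fun q ι => {{msgNext q ι}}

/-- The strategy `s₁` of process `p₁` that outputs `m₁` at every step. -/
def msgS1 : Strat (Fin 2) := fun _ => {0}

/-- The strategy `t₁` of process `p₁` that outputs `m₁` at step `j+1` iff `m₂`
occurred at some step `≤ j`. -/
noncomputable def msgT1 : Strat (Fin 2) := fun h =>
  if ∃ x ∈ h, (1 : Fin 2) ∈ x then {0} else ∅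

section Helpers

open DelayDom

lemma hist_length (ρ : ℕ → Fin 4 × Fin 4) (j : ℕ) : (hist ρ j).length = j := by
  simp [hist]

lemma hist_succ (ρ : ℕ → Fin 4 × Fin 4) (j : ℕ) :
    hist ρ (j + 1) = hist ρ j ++ [ρ j] := by
  simp [hist, List.range_succ]

lemma msgACA_trans (q : Fin 4) (ι : Set (Fin 2)) {c : Set (Fin 4)} :
    c ∈ msgACA.trans q ι ↔ c = {msgNext q ι} := by
  simp [msgACA]

lemma msgNext_three (ι : Set (Fin 2)) : msgNext 3 ι = 3 := by
  simp [msgNext]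

lemma msgNext_both {q : Fin 4} {ι : Set (Fin 2)}
    (h0 : (0 : Fin 2) ∈ ι) (h1 : (1 : Fin 2) ∈ ι) : msgNext q ι = 3 := by
  fin_cases q <;> simp [msgNext, h0, h1]

lemma msgNext_no1 {q : Fin 4} {ι : Set (Fin 2)} (hq : q = 0 ∨ q = 1)
    (h1 : (1 : Fin 2) ∉ ι) : msgNext q ι = 0 ∨ msgNext q ι = 1 := by
  rcases hq with rfl | rfl <;> simp [msgNext, h1] <;> tauto

/-- Membership of `1` in a computation letter is determined by `γ`. -/
lemma one_mem_comp (s : Strat (Fin 2)) (γ : ℕ → Set (Fin 2)) (j : ℕ) :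
    (1 : Fin 2) ∈ comp ({1} : Set (Fin 2)) ({0} : Set (Fin 2)) s γ j ↔ (1 : Fin 2) ∈ γ j := by
  simp only [comp, Set.mem_union, Set.mem_inter_iff, Set.mem_singleton_iff]
  constructor
  · rintro (⟨h, _⟩ | ⟨_, h⟩)
    · exact h
    · exact absurd h (by decide)
  · intro h; exact Or.inl ⟨h, by trivial⟩

lemma zero_mem_comp_s1 (γ : ℕ → Set (Fin 2)) (j : ℕ) :
    (0 : Fin 2) ∈ comp ({1} : Set (Fin 2)) ({0} : Set (Fin 2)) msgS1 γ j := by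
  simp [comp, msgS1]

/-- The canonical Duplicator strategy for a deterministic automaton. -/
noncomputable def msgTau (σ σ' : ℕ → Set (Fin 2)) : DupStrategy (Fin 4) where
  chooseSet := fun h pq _ => {msgNext pq.2 (σ' h.length)}
  chooseState := fun h pq _ _ _ => msgNext pq.1 (σ h.length)

/-- The unique play of the delay-dominance game for the deterministic automaton. -/
noncomputable def msgPlay (σ σ' : ℕ → Set (Fin 2)) : ℕ → Fin 4 × Fin 4
  | 0 => (0, 0)
  | j + 1 => (msgNext (msgPlay σ σ' j).1 (σ j), msgNext (msgPlay σ σ' j).2 (σ' j))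

lemma msgTau_valid (σ σ' : ℕ → Set (Fin 2)) :
    DupValid msgACA σ σ' (msgTau σ σ') := by
  intro h pq _ c hc
  refine ⟨by simp [msgTau, msgACA], ?_⟩
  intro q' _
  rw [(msgACA_trans _ _).mp hc]
  simp [msgTau]

lemma consistent_step {σ σ' : ℕ → Set (Fin 2)} {ρ : ℕ → Fin 4 × Fin 4}
    (hcons : DupConsistent msgACA σ σ' (msgTau σ σ') ρ) (j : ℕ) :
    ρ (j + 1) = (msgNext (ρ j).1 (σ j), msgNext (ρ j).2 (σ' j)) := by
  obtain ⟨_, hstep⟩ := hcons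
  obtain ⟨c, hc, h2, h1⟩ := hstep j
  simp only [msgTau, hist_length, Set.mem_singleton_iff] at h2 h1
  exact Prod.ext h1 h2

lemma run_no1 {σ : ℕ → Set (Fin 2)} {r : ℕ → Fin 4} (hr0 : r 0 = 0)
    (hstep : ∀ j, r (j + 1) = msgNext (r j) (σ j)) (j : ℕ)
    (hγ : ∀ k < j, (1 : Fin 2) ∉ σ k) : r j = 0 ∨ r j = 1 := by
  induction j with
  | zero => exact Or.inl hr0
  | succ j ih =>
      have := ih (fun k hk => hγ k (Nat.lt_succ_of_lt hk))
      rw [hstep j]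
      exact msgNext_no1 this (hγ j (Nat.lt_succ_self j))

lemma run_s1_three {γ : ℕ → Set (Fin 2)} {r : ℕ → Fin 4}
    (hstep : ∀ j, r (j + 1) =
      msgNext (r j) (comp ({1} : Set (Fin 2)) ({0} : Set (Fin 2)) msgS1 γ j))
    (j : ℕ) (hγ : ∃ k < j, (1 : Fin 2) ∈ γ k) : r j = 3 := by
  induction j with
  | zero => obtain ⟨k, hk, _⟩ := hγ; omega
  | succ j ih =>
      obtain ⟨k, hk, hk1⟩ := hγ
      rw [hstep j]
      rcases Nat.lt_succ_iff_lt_or_eq.mp hk with hk' | hk''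
      · rw [ih ⟨k, hk', hk1⟩]; exact msgNext_three _
      · exact msgNext_both (zero_mem_comp_s1 γ j) ((one_mem_comp _ γ j).mpr (hk'' ▸ hk1))

/-- Reachability and consistency of the unique play, for an arbitrary valid
Duplicator strategy. -/
lemma msgPlay_reach {σ σ' : ℕ → Set (Fin 2)} {τ : DupStrategy (Fin 4)}
    (hval : DupValid msgACA σ σ' τ) (j : ℕ) :
    DupReach msgACA σ σ' τ (hist (msgPlay σ σ') j) (msgPlay σ σ' j) ∧
    τ.chooseSet (hist (msgPlay σ σ') j) (msgPlay σ σ' j)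
        {msgNext (msgPlay σ σ' j).1 (σ j)} =
      {msgNext (msgPlay σ σ' j).2 (σ' j)} ∧
    τ.chooseState (hist (msgPlay σ σ') j) (msgPlay σ σ' j)
        {msgNext (msgPlay σ σ' j).1 (σ j)} {msgNext (msgPlay σ σ' j).2 (σ' j)}
        (msgNext (msgPlay σ σ' j).2 (σ' j)) =
      msgNext (msgPlay σ σ' j).1 (σ j) := by
  induction j with
  | zero =>
      have hreach : DupReach msgACA σ σ' τ (hist (msgPlay σ σ') 0) (msgPlay σ σ' 0) := by
        have : hist (msgPlay σ σ') 0 = [] := by simp [hist]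
        rw [this]
        exact DupReach.init
      refine ⟨hreach, ?_⟩
      have hc : ({msgNext (msgPlay σ σ' 0).1 (σ 0)} : Set (Fin 4)) ∈
          msgACA.trans (msgPlay σ σ' 0).1 (σ (hist (msgPlay σ σ') 0).length) := by
        rw [hist_length]; exact (msgACA_trans _ _).mpr rfl
      obtain ⟨hset, hstate⟩ := hval _ _ hreach _ hc
      rw [hist_length] at hset
      have hset' := (msgACA_trans _ _).mp hset
      refine ⟨hset', ?_⟩
      have hmem : msgNext (msgPlay σ σ' 0).2 (σ' 0) ∈
          τ.chooseSet (hist (msgPlay σ σ') 0) (msgPlay σ σ' 0)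
            {msgNext (msgPlay σ σ' 0).1 (σ 0)} := by rw [hset']; rfl
      have := hstate _ hmem
      rw [hset'] at this
      exact this
  | succ j ih =>
      obtain ⟨hreach, hset, hstate⟩ := ih
      have hc : ({msgNext (msgPlay σ σ' j).1 (σ j)} : Set (Fin 4)) ∈
          msgACA.trans (msgPlay σ σ' j).1 (σ (hist (msgPlay σ σ') j).length) := by
        rw [hist_length]; exact (msgACA_trans _ _).mpr rfl
      have hmem : msgNext (msgPlay σ σ' j).2 (σ' j) ∈
          τ.chooseSet (hist (msgPlay σ σ') j) (msgPlay σ σ' j)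
            {msgNext (msgPlay σ σ' j).1 (σ j)} := by rw [hset]; rfl
      have hstep := DupReach.step hreach hc hmem
      rw [hset, hstate] at hstep
      have hreach' : DupReach msgACA σ σ' τ (hist (msgPlay σ σ') (j + 1))
          (msgPlay σ σ' (j + 1)) := by
        rw [hist_succ]
        exact hstep
      refine ⟨hreach', ?_⟩
      have hc' : ({msgNext (msgPlay σ σ' (j+1)).1 (σ (j+1))} : Set (Fin 4)) ∈
          msgACA.trans (msgPlay σ σ' (j+1)).1 (σ (hist (msgPlay σ σ') (j+1)).length) := by
        rw [hist_length]; exact (msgACA_trans _ _).mpr rfl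
      obtain ⟨hset', hstate'⟩ := hval _ _ hreach' _ hc'
      rw [hist_length] at hset'
      have hset'' := (msgACA_trans _ _).mp hset'
      refine ⟨hset'', ?_⟩
      have hmem' : msgNext (msgPlay σ σ' (j+1)).2 (σ' (j+1)) ∈
          τ.chooseSet (hist (msgPlay σ σ') (j+1)) (msgPlay σ σ' (j+1))
            {msgNext (msgPlay σ σ' (j+1)).1 (σ (j+1))} := by rw [hset'']; rfl
      have := hstate' _ hmem'
      rw [hset''] at this
      exact this

lemma msgPlay_consistent {σ σ' : ℕ → Set (Fin 2)} {τ : DupStrategy (Fin 4)}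
    (hval : DupValid msgACA σ σ' τ) :
    DupConsistent msgACA σ σ' τ (msgPlay σ σ') := by
  refine ⟨rfl, fun j => ?_⟩
  obtain ⟨_, hset, hstate⟩ := msgPlay_reach hval j
  refine ⟨{msgNext (msgPlay σ σ' j).1 (σ j)}, (msgACA_trans _ _).mpr rfl, ?_, ?_⟩
  · rw [hset]; rfl
  · rw [hset]
    show msgNext (msgPlay σ σ' j).1 (σ j) = _
    exact (hstate).symm

end Helpers

/-- For the two-message specification `φ = F m₁ ∧ F m₂` and its deterministic ACA,
the strategy that immediately sends `m₁` is delay-dominant, while the strategy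
that waits for `m₂` before sending `m₁` is not. Process `p₁` has inputs `{m₂}`
and outputs `{m₁}`. -/
theorem msg_example :
    DelayDominant msgACA ({1} : Set (Fin 2)) ({0} : Set (Fin 2)) msgS1 ∧
    ¬ DelayDominant msgACA ({1} : Set (Fin 2)) ({0} : Set (Fin 2)) msgT1 := by
  constructor
  · -- s₁ is delay-dominant
    intro t γ
    set σ := comp ({1} : Set (Fin 2)) ({0} : Set (Fin 2)) t γ with hσ
    set σ' := comp ({1} : Set (Fin 2)) ({0} : Set (Fin 2)) msgS1 γ with hσ'
    refine ⟨msgTau σ σ', msgTau_valid σ σ', ?_⟩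
    intro ρ hcons
    intro j hrej
    -- if the dominant run is rejecting at j, no m₂ occurred before j
    have hρ0 : ρ 0 = ((0 : Fin 4), (0 : Fin 4)) := hcons.1
    have hstep := consistent_step hcons
    have hfst0 : (ρ 0).1 = 0 := by rw [hρ0]
    have hfstep : ∀ j, (ρ (j + 1)).1 = msgNext ((ρ j).1) (σ j) := by
      intro j; rw [hstep j]
    have hsstep : ∀ j, (ρ (j + 1)).2 = msgNext ((ρ j).2) (σ' j) := by
      intro j; rw [hstep j]
    have hno1 : ∀ k < j, (1 : Fin 2) ∉ γ k := by
      by_contra hcon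
      push_neg at hcon
      obtain ⟨k, hk, hk1⟩ := hcon
      have h3 : (ρ j).2 = 3 := run_s1_three (r := fun j => (ρ j).2) hsstep j ⟨k, hk, hk1⟩
      rw [h3] at hrej
      revert hrej
      simp [msgACA]
    have hno1' : ∀ k < j, (1 : Fin 2) ∉ σ k := by
      intro k hk h1
      exact hno1 k hk ((one_mem_comp t γ k).mp h1)
    refine ⟨j, le_refl j, ?_⟩
    rcases run_no1 (r := fun j => (ρ j).1) hfst0 hfstep j hno1' with h | h <;>
      rw [h] <;> simp [msgACA]
  · -- t₁ is not delay-dominant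
    intro hdom
    set γ : ℕ → Set (Fin 2) := fun _ => ({1} : Set (Fin 2)) with hγ
    obtain ⟨τ, hval, hwin⟩ := hdom msgS1 γ
    set σ := comp ({1} : Set (Fin 2)) ({0} : Set (Fin 2)) msgS1 γ with hσ
    set σ' := comp ({1} : Set (Fin 2)) ({0} : Set (Fin 2)) msgT1 γ with hσ'
    have hcons := msgPlay_consistent (σ := σ) (σ' := σ') hval
    have hwc := hwin _ hcons
    -- compute the play
    have hσ0 : (0 : Fin 2) ∈ σ 0 ∧ (1 : Fin 2) ∈ σ 0 := by
      constructor
      · exact zero_mem_comp_s1 γ 0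
      · exact (one_mem_comp msgS1 γ 0).mpr rfl
    have hσ'0 : (0 : Fin 2) ∉ σ' 0 ∧ (1 : Fin 2) ∈ σ' 0 := by
      constructor
      · intro h
        simp only [hσ', comp, List.range_zero, List.map_nil, msgT1,
          Set.mem_union, Set.mem_inter_iff, Set.mem_singleton_iff] at h
        rcases h with ⟨h, _⟩ | ⟨h, _⟩
        · exact absurd h (by decide)
        · simp at h
      · exact (one_mem_comp msgT1 γ 0).mpr rfl
    have hplay1 : msgPlay σ σ' 1 = ((3 : Fin 4), (2 : Fin 4)) := by
      show (msgNext 0 (σ 0), msgNext 0 (σ' 0)) = _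
      rw [msgNext_both hσ0.1 hσ0.2]
      have : msgNext (0 : Fin 4) (σ' 0) = 2 := by
        simp [msgNext, hσ'0.1, hσ'0.2]
      rw [this]
    have hfst3 : ∀ j, 1 ≤ j → (msgPlay σ σ' j).1 = 3 := by
      intro j hj
      induction j with
      | zero => omega
      | succ j ih =>
          rcases Nat.lt_or_ge 1 (j + 1) with h | h
          · have := ih (by omega)
            show msgNext (msgPlay σ σ' j).1 (σ j) = 3
            rw [this, msgNext_three]
          · have hj1 : j + 1 = 1 := by omega
            rw [hj1, hplay1]
    obtain ⟨j', hj', hrej⟩ := hwc 1 (by rw [hplay1]; simp [msgACA])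
    rw [hfst3 j' hj'] at hrej
    revert hrej
    simp [msgACA]
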